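/- Let a : ℝ^d → ℝ be a nonnegative C¹ function with compact support and with bounded gradient, and fix 𝒞 > 0. There exists C > 0 such that for all λ > 0, all τ ≥ max(𝒞λ, 1), and all x, y ∈ ℝ^d: 1 + λ a(y) ≤ C (1 + λ a(x)) (1 + τ²|x−y|²)^{1/2}. (In other words, the weight 1 + λa is g-temperate.) -/

import Mathlib

/-- For a nonnegative `C¹` function `a` with compact support and bounded
gradient, the weight `1 + λ a` is `g`-temperate: there is `C > 0` such that for all
`λ > 0`, `τ ≥ max(𝒞λ,1)` and all `x, y`,
`1 + λ a(y) ≤ C (1 + λ a(x)) (1 + τ²|x-y|²)^{1/2}`. -/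
theorem weight_g_temperate (d : ℕ) (a : EuclideanSpace ℝ (Fin d) → ℝ)
    (ha : ContDiff ℝ 1 a) (hsupp : HasCompactSupport a) (hpos : ∀ x, 0 ≤ a x)
    (hgrad : ∃ M : ℝ, ∀ x, ‖fderiv ℝ a x‖ ≤ M)
    (𝒞 : ℝ) (h𝒞 : 0 < 𝒞) :
    ∃ C > (0:ℝ), ∀ lam τ : ℝ, 0 < lam → max (𝒞 * lam) 1 ≤ τ →
      ∀ x y : EuclideanSpace ℝ (Fin d),
        1 + lam * a y ≤ C * (1 + lam * a x) * Real.sqrt (1 + τ ^ 2 * ‖x - y‖ ^ 2) := by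
  obtain ⟨M, hM⟩ := hgrad
  set M' : ℝ := max M 0 with hM'
  have hM'0 : 0 ≤ M' := le_max_right _ _
  refine ⟨1 + M' / 𝒞, by positivity, ?_⟩
  intro lam τ hlam hτ x y
  have hτ1 : (1:ℝ) ≤ τ := le_trans (le_max_right _ _) hτ
  have hτCl : 𝒞 * lam ≤ τ := le_trans (le_max_left _ _) hτ
  have hlip : ‖a y - a x‖ ≤ M' * ‖y - x‖ := by
    apply Convex.norm_image_sub_le_of_norm_fderiv_le
      (fun z _ => (ha.differentiable one_ne_zero).differentiableAt)
      (fun z _ => le_trans (hM z) (le_max_left _ _)) convex_univ (Set.mem_univ x)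
      (Set.mem_univ y)
  have hlip' : a y - a x ≤ M' * ‖x - y‖ := by
    rw [norm_sub_rev x y]
    exact le_trans (le_abs_self _) hlip
  set s := Real.sqrt (1 + τ ^ 2 * ‖x - y‖ ^ 2) with hs
  have hs1 : 1 ≤ s := by
    rw [hs]
    apply Real.one_le_sqrt.mpr
    nlinarith [sq_nonneg (τ * ‖x - y‖), norm_nonneg (x - y)]
  have hts : τ * ‖x - y‖ ≤ s := by
    rw [hs]
    have h0 : 0 ≤ τ * ‖x - y‖ := by positivity
    apply (Real.le_sqrt h0 (by positivity)).mpr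
    nlinarith [norm_nonneg (x - y)]
  have hax := hpos x
  have hay := hpos y
  have h1 : lam * (a y - a x) ≤ lam * (M' * ‖x - y‖) :=
    mul_le_mul_of_nonneg_left hlip' hlam.le
  have h2 : lam * M' * ‖x - y‖ ≤ (M' / 𝒞) * (τ * ‖x - y‖) := by
    rw [div_mul_eq_mul_div, le_div_iff₀ h𝒞]
    nlinarith [mul_le_mul_of_nonneg_left hτCl (mul_nonneg hM'0 (norm_nonneg (x - y)))]
  have h3 : (M' / 𝒞) * (τ * ‖x - y‖) ≤ (M' / 𝒞) * s :=
    mul_le_mul_of_nonneg_left hts (by positivity)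
  have hMC : 0 ≤ M' / 𝒞 := by positivity
  nlinarith [mul_le_mul_of_nonneg_left hs1 (by positivity : (0:ℝ) ≤ 1 + lam * a x),
    mul_le_mul_of_nonneg_left hs1 hMC, mul_nonneg hlam.le hax, mul_nonneg hMC (mul_nonneg hlam.le hax), mul_nonneg (mul_nonneg hMC (mul_nonneg hlam.le hax)) (le_trans zero_le_one hs1)]
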